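/- Let ℓ¹ be the real Banach space of absolutely summable sequences with norm ‖·‖₁, let r > 0, and let P_{rB} be the set-valued metric projection onto the closed ball rB = {w ∈ ℓ¹ : ‖w‖₁ ≤ r}: v ∈ P_{rB}(u) if and only if ‖v‖₁ ≤ r and ‖u − v‖₁ ≤ ‖u − w‖₁ for all w with ‖w‖₁ ≤ r. Let x ∈ ℓ¹ with ‖x‖₁ > r, and set y = (r/‖x‖₁)·x (which satisfies y ∈ P_{rB}(x)). Then the only fixed point of the Mordukhovich differential operator D̂*P_{rB}(x, y) is the zero functional: a bounded sequence φ : ℕ → ℝ satisfies φ ∈ D̂*P_{rB}(x, y)(φ) if and only if φ = 0. -/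

import Mathlib

open scoped ENNReal


lemma l1_norm_eq (f : lp (fun _ : ℕ => ℝ) 1) : ‖f‖ = ∑' i, |f i| := by
  rw [lp.norm_eq_tsum_rpow (by simp) f]
  simp [Real.norm_eq_abs]

lemma l1_summable (f : lp (fun _ : ℕ => ℝ) 1) : Summable fun i => |f i| := by
  have := (lp.memℓp f).summable (p := 1) (by simp)
  simpa [Real.norm_eq_abs] using this

lemma key_ineq (a t c : ℝ) (hc0 : 0 ≤ c)
    (h : |t| ≤ c * |a| ∨ a = 0) : (1 - c) * |a| ≤ |a + t| - |c * a + t| := by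
  rcases h with h | rfl
  · rcases abs_cases a with ⟨ha, _⟩ | ⟨ha, _⟩ <;>
    rcases abs_cases t with ⟨ht, _⟩ | ⟨ht, _⟩ <;>
    rcases abs_cases (a + t) with ⟨h1, _⟩ | ⟨h1, _⟩ <;>
    rcases abs_cases (c * a + t) with ⟨h2, _⟩ | ⟨h2, _⟩ <;>
    nlinarith
  · simp

lemma proj_key (r : ℝ) (hr : 0 < r)
    (x : lp (fun _ : ℕ => ℝ) 1) (hx : r < ‖x‖)
    (y : lp (fun _ : ℕ => ℝ) 1) (hy : y = (r / ‖x‖) • x)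
    (i : ℕ) (t : ℝ)
    (ht : |t| ≤ (1 - r / ‖x‖) * |(x : ℕ → ℝ) i| ∨ (x : ℕ → ℝ) i = 0) :
    ‖(x + lp.single 1 i t) - y‖ ≤ ‖x + lp.single 1 i t‖ - r := by
  set c : ℝ := 1 - r / ‖x‖ with hc
  have hxpos : 0 < ‖x‖ := hr.trans hx
  have hrx : r / ‖x‖ < 1 := (div_lt_one hxpos).2 hx
  have hc0 : 0 ≤ c := by simp only [hc]; linarith
  set u : lp (fun _ : ℕ => ℝ) 1 := x + lp.single 1 i t with hu
  have hcoe : ∀ j, (r / ‖x‖) * |(x : ℕ → ℝ) j| ≤ |(u : ℕ → ℝ) j| - |((u - y) : ℕ → ℝ) j| := by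
    intro j
    have h1 : (u : ℕ → ℝ) j = (x : ℕ → ℝ) j + (lp.single 1 i t : ℕ → ℝ) j := by
      simp [hu]
    have h2 : ((u - y) : ℕ → ℝ) j
        = c * (x : ℕ → ℝ) j + (lp.single 1 i t : ℕ → ℝ) j := by
      simp [hu, hy, hc]
      change (x : ℕ → ℝ) j + (Pi.single i t : ℕ → ℝ) j - (r * ‖x‖⁻¹) * (x : ℕ → ℝ) j = _
      ring
    by_cases hij : j = i
    · subst hij
      rw [h1, h2, lp.single_apply_self]
      have := key_ineq ((x : ℕ → ℝ) j) t c hc0 ht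
      have hc1 : 1 - c = r / ‖x‖ := by rw [hc]; ring
      rw [hc1] at this
      linarith [this]
    · rw [h1, h2, lp.single_apply_ne (E := fun _ : ℕ => ℝ) 1 i t hij]
      rw [add_zero, add_zero, abs_mul, abs_of_nonneg hc0]
      nlinarith [abs_nonneg ((x : ℕ → ℝ) j)]
  have hsum1 := l1_summable u
  have hsum2 : Summable fun j => |(u : ℕ → ℝ) j - (y : ℕ → ℝ) j| := by
    have := l1_summable (u - y)
    simpa [lp.coeFn_sub, Pi.sub_apply] using this
  have hsumx := l1_summable x
  have hcoe' : ∀ j, (r / ‖x‖) * |(x : ℕ → ℝ) j|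
      ≤ |(u : ℕ → ℝ) j| - |(u : ℕ → ℝ) j - (y : ℕ → ℝ) j| := by
    intro j
    have := hcoe j
    simpa [lp.coeFn_sub, Pi.sub_apply] using this
  have hnuy : ‖u - y‖ = ∑' j, |(u : ℕ → ℝ) j - (y : ℕ → ℝ) j| := by
    rw [l1_norm_eq (u - y)]
    exact tsum_congr fun j => by simp [lp.coeFn_sub, Pi.sub_apply]
  have htsum : r ≤ ‖u‖ - ‖u - y‖ := by
    have hle : (∑' j, (r / ‖x‖) * |(x : ℕ → ℝ) j|)
        ≤ ∑' j, (|(u : ℕ → ℝ) j| - |(u : ℕ → ℝ) j - (y : ℕ → ℝ) j|) :=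
      Summable.tsum_le_tsum hcoe' (hsumx.mul_left _) (hsum1.sub hsum2)
    rw [tsum_mul_left, Summable.tsum_sub hsum1 hsum2] at hle
    rw [l1_norm_eq u, hnuy]
    calc r = (r / ‖x‖) * ‖x‖ := by field_simp
    _ = (r / ‖x‖) * ∑' j, |(x : ℕ → ℝ) j| := by rw [l1_norm_eq x]
    _ ≤ _ := hle
  linarith

/-- Let `ℓ¹` be the real Banach space of absolutely summable sequences
and `P_{rB}` the set-valued metric projection onto the closed ball of radius `r > 0`:
`v ∈ P_{rB}(u)` iff `‖v‖₁ ≤ r` and `‖u - v‖₁ ≤ ‖u - w‖₁` for all `w` with `‖w‖₁ ≤ r`.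
Let `x ∈ ℓ¹` with `‖x‖₁ > r` and `y = (r/‖x‖₁) • x`.  Then the only fixed point of
the Mordukhovich differential operator `D̂*P_{rB}(x, y)` is the zero functional:
a bounded sequence `φ` satisfies `φ ∈ D̂*P_{rB}(x, y)(φ)` iff `φ = 0`. -/
theorem mordFixedPoint_ball_projection_l1_exterior
    (r : ℝ) (hr : 0 < r)
    (x : lp (fun _ : ℕ => ℝ) 1) (hx : r < ‖x‖)
    (y : lp (fun _ : ℕ => ℝ) 1) (hy : y = (r / ‖x‖) • x)
    (φ : ℕ → ℝ) (hφ : ∃ C : ℝ, ∀ i, |φ i| ≤ C) :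
    ((∀ ε > (0 : ℝ), ∃ δ > (0 : ℝ), ∀ u v : lp (fun _ : ℕ => ℝ) 1,
        (‖v‖ ≤ r ∧ ∀ w : lp (fun _ : ℕ => ℝ) 1, ‖w‖ ≤ r → ‖u - v‖ ≤ ‖u - w‖) →
        ‖u - x‖ + ‖v - y‖ < δ →
          (∑' i, φ i * (u - x) i) - (∑' i, φ i * (v - y) i)
            ≤ ε * (‖u - x‖ + ‖v - y‖))
      ↔ φ = 0) := by
  have hxpos : 0 < ‖x‖ := hr.trans hx
  have hyr : ‖y‖ = r := by
    rw [hy, norm_smul, Real.norm_eq_abs, abs_of_pos (div_pos hr hxpos)]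
    field_simp
  constructor
  · intro H
    funext i
    show φ i = 0
    set c : ℝ := 1 - r / ‖x‖ with hc
    have hrx : r / ‖x‖ < 1 := (div_lt_one hxpos).2 hx
    have hc0 : 0 < c := by simp only [hc]; linarith
    -- for each t with the right side condition, get φ i * t ≤ ε * |t|
    have step : ∀ ε > (0:ℝ), ∃ δ > (0:ℝ), ∀ t : ℝ,
        (|t| ≤ c * |(x : ℕ → ℝ) i| ∨ (x : ℕ → ℝ) i = 0) → |t| < δ →
        φ i * t ≤ ε * |t| := by
      intro ε hε
      obtain ⟨δ, hδ, H'⟩ := H ε hε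
      refine ⟨δ, hδ, fun t ht htδ => ?_⟩
      set u : lp (fun _ : ℕ => ℝ) 1 := x + lp.single 1 i t with hu
      have hux : u - x = lp.single 1 i t := by rw [hu]; abel
      have hnux : ‖u - x‖ = |t| := by
        rw [hux]
        simpa [Real.norm_eq_abs] using lp.norm_single (p := 1) (by simp) (fun _ : ℕ => t) i
      have hproj : ∀ w : lp (fun _ : ℕ => ℝ) 1, ‖w‖ ≤ r → ‖u - y‖ ≤ ‖u - w‖ := by
        intro w hw
        have h1 : ‖u - y‖ ≤ ‖u‖ - r := proj_key r hr x hx y hy i t ht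
        have h2 : ‖u‖ - ‖w‖ ≤ ‖u - w‖ := by
          have := norm_sub_norm_le u w
          linarith [abs_le.1 (abs_norm_sub_norm_le u w)]
        linarith
      have happ := H' u y ⟨le_of_eq hyr, hproj⟩ (by simpa [hnux] using htδ)
      have hts1 : (∑' j, φ j * ((u - x) : lp (fun _ : ℕ => ℝ) 1) j) = φ i * t := by
        rw [hux]
        rw [tsum_eq_single i]
        · rw [lp.single_apply_self]
        · intro j hj
          rw [lp.single_apply_ne (E := fun _ : ℕ => ℝ) 1 i t hj, mul_zero]
      have hts2 : (∑' j, φ j * ((y - y) : lp (fun _ : ℕ => ℝ) 1) j) = 0 := by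
        simp
      rw [hts1, hts2, sub_zero] at happ
      simpa [hnux] using happ
    have habs : ∀ ε > (0:ℝ), |φ i| ≤ ε := by
      intro ε hε
      obtain ⟨δ, hδ, hstep⟩ := step ε hε
      set t0 : ℝ := if (x : ℕ → ℝ) i = 0 then δ/2 else min (δ/2) (c * |(x : ℕ → ℝ) i|)
        with ht0
      have ht0pos : 0 < t0 := by
        rw [ht0]
        split
        · linarith
        · exact lt_min (by linarith) (mul_pos hc0 (abs_pos.2 (by assumption)))
      have ht0δ : t0 < δ := by
        rw [ht0]; split
        · linarith
        · exact lt_of_le_of_lt (min_le_left _ _) (by linarith)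
      have hcond : ∀ s : ℝ, |s| = t0 →
          (|s| ≤ c * |(x : ℕ → ℝ) i| ∨ (x : ℕ → ℝ) i = 0) := by
        intro s hs
        by_cases hxi : (x : ℕ → ℝ) i = 0
        · exact Or.inr hxi
        · left
          rw [hs, ht0]
          simp only [if_neg hxi]
          exact min_le_right _ _
      have h1 := hstep t0 (hcond t0 (abs_of_pos ht0pos)) (by rw [abs_of_pos ht0pos]; exact ht0δ)
      have h2 := hstep (-t0) (hcond (-t0) (by rw [abs_neg, abs_of_pos ht0pos]))
        (by rw [abs_neg, abs_of_pos ht0pos]; exact ht0δ)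
      rw [abs_of_pos ht0pos] at h1
      rw [abs_neg, abs_of_pos ht0pos] at h2
      rcases abs_cases (φ i) with ⟨he, _⟩ | ⟨he, _⟩
      · rw [he]; nlinarith
      · rw [he]; nlinarith
    by_contra hne
    have hpos : 0 < |φ i| := abs_pos.2 hne
    have := habs (|φ i| / 2) (by linarith)
    linarith
  · intro h ε hε
    refine ⟨1, one_pos, fun u v _ _ => ?_⟩
    simp only [h, Pi.zero_apply, zero_mul, tsum_zero, sub_zero]
    positivity
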